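/- (On an action Lie algebroid, equivariance turns ᴱd into −d_CE.) Let A be a commutative ℝ-algebra, 𝔤 a real Lie algebra, and ρ : 𝔤 → Der_ℝ(A) a Lie algebra homomorphism. Let α : 𝔤^m → A be an alternating ℝ-multilinear map which is equivariant, i.e., ρ(e)(α(e₁,…,e_m)) = Σ_{i=1}^m (−1)^{i−1} α(⁅e,e_i⁆, e₁,…,ê_i,…,e_m) for all e, e₁,…,e_m ∈ 𝔤. Then (ᴱdα)(e₁,…,e_{m+1}) = −(d_CE α)(e₁,…,e_{m+1}) for all e₁,…,e_{m+1} ∈ 𝔤, where ᴱdα is the Lie algebroid differential and d_CE α is the Chevalley–Eilenberg differential. -/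

import Mathlib

open scoped BigOperators

/-- The tuple obtained from `e : Fin (m+1) → L` by inserting `b` in front and
omitting the entries at positions `i` and `j` (intended for `i < j`). -/
def omit2cons {L : Type*} {m : ℕ} (b : L) (e : Fin (m + 1) → L) (i j : Fin (m + 1)) :
    Fin m → L := fun k =>
  if (k : ℕ) = 0 then b
  else e ⟨if (k : ℕ) - 1 < (i : ℕ) then (k : ℕ) - 1
          else if (k : ℕ) < (j : ℕ) then (k : ℕ) else (k : ℕ) + 1,
        by have := k.isLt; split_ifs <;> omega⟩

/-- The tuple obtained from `f : Fin m → L` by inserting `b` in front and omitting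
the entry at position `i`. -/
def consOmit1 {L : Type*} {m : ℕ} (b : L) (f : Fin m → L) (i : Fin m) : Fin m → L := fun k =>
  if (k : ℕ) = 0 then b
  else f ⟨if (k : ℕ) - 1 < (i : ℕ) then (k : ℕ) - 1 else (k : ℕ),
        by have := k.isLt; split_ifs <;> omega⟩

lemma succAbove_val' {m : ℕ} (p : Fin (m+1)) (x : Fin m) :
    ((p.succAbove x : Fin (m+1)) : ℕ) = if (x:ℕ) < (p:ℕ) then (x:ℕ) else (x:ℕ)+1 := by
  rw [Fin.succAbove]; split_ifs with h1 h2 h2 <;> simp_all [Fin.lt_def]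

lemma tupleA {L : Type*} {m : ℕ} (b : L) (e : Fin (m+1) → L) (i : Fin (m+1)) (k : Fin m)
    (h : (i:ℕ) ≤ (k:ℕ)) :
    consOmit1 b (e ∘ i.succAbove) k = omit2cons b e i (i.succAbove k) := by
  have hj : ((i.succAbove k : Fin (m+1)) : ℕ) = (k:ℕ)+1 := by
    rw [succAbove_val', if_neg (by omega)]
  funext k'
  unfold consOmit1 omit2cons
  by_cases h0 : (k':ℕ) = 0
  · simp [h0]
  · simp only [h0, if_false, Function.comp_apply]
    congr 1
    rw [Fin.ext_iff]
    simp only [succAbove_val', hj]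
    have := k'.isLt
    split_ifs <;> omega

lemma tupleB {L : Type*} {m : ℕ} (b : L) (e : Fin (m+1) → L) (i : Fin (m+1)) (k : Fin m)
    (h : (k:ℕ) < (i:ℕ)) :
    consOmit1 b (e ∘ i.succAbove) k = omit2cons b e (i.succAbove k) i := by
  have hj : ((i.succAbove k : Fin (m+1)) : ℕ) = (k:ℕ) := by
    rw [succAbove_val', if_pos h]
  funext k'
  unfold consOmit1 omit2cons
  by_cases h0 : (k':ℕ) = 0
  · simp [h0]
  · simp only [h0, if_false, Function.comp_apply]
    congr 1
    rw [Fin.ext_iff]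
    simp only [succAbove_val', hj]
    have := k'.isLt
    split_ifs <;> omega

lemma omit2cons_update {L : Type*} {m : ℕ} [NeZero m] (b z : L) (e : Fin (m + 1) → L)
    (i j : Fin (m + 1)) :
    omit2cons b e i j = Function.update (omit2cons z e i j) 0 b := by
  funext k
  by_cases h0 : k = 0
  · subst h0; simp [omit2cons, Function.update]
  · have hk : (k:ℕ) ≠ 0 := by
      intro h; apply h0; ext; simp [h]
    rw [Function.update_of_ne h0]
    simp [omit2cons, hk]

lemma omit2cons_neg {A : Type*} [CommRing A] [Algebra ℝ A] {𝔤 : Type*} [LieRing 𝔤]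
    [LieAlgebra ℝ 𝔤] {m : ℕ} [NeZero m] (α : AlternatingMap ℝ 𝔤 A (Fin m))
    (b : 𝔤) (e : Fin (m+1) → 𝔤) (i j : Fin (m+1)) :
    α (omit2cons (-b) e i j) = - α (omit2cons b e i j) := by
  rw [omit2cons_update (-b) (0:𝔤) e i j, omit2cons_update b (0:𝔤) e i j]
  exact α.toMultilinearMap.map_update_neg _ 0 b

lemma neg_one_pow_succ (n : ℕ) : (-1 : ℤ) ^ (n+1) = -(-1:ℤ)^n := by
  rw [pow_succ]; ring

/-- (On an action Lie algebroid, equivariance turns `ᴱd` into `−d_CE`.)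
Let `A` be a commutative `ℝ`-algebra, `𝔤` a real Lie algebra, `ρ : 𝔤 → Der_ℝ(A)` a Lie
algebra homomorphism, and `α : 𝔤ᵐ → A` an alternating `ℝ`-multilinear map which is
equivariant, i.e. `ρ(e)(α(e₁,…,e_m)) = Σᵢ (−1)^{i−1} α(⁅e,eᵢ⁆, e₁,…,êᵢ,…,e_m)`.
Then `(ᴱdα)(e₁,…,e_{m+1}) = −(d_CE α)(e₁,…,e_{m+1})`. -/
theorem eDiff_eq_neg_cheEilenberg_of_equivariant
    {A : Type*} [CommRing A] [Algebra ℝ A]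
    {𝔤 : Type*} [LieRing 𝔤] [LieAlgebra ℝ 𝔤]
    (ρ : 𝔤 →ₗ[ℝ] Derivation ℝ A A)
    (hρ : ∀ e₁ e₂ : 𝔤, ρ ⁅e₁, e₂⁆ = ⁅ρ e₁, ρ e₂⁆)
    {m : ℕ} (α : AlternatingMap ℝ 𝔤 A (Fin m))
    (hequiv : ∀ (e : 𝔤) (f : Fin m → 𝔤),
      ρ e (α f) = ∑ i : Fin m, (-1 : ℤ) ^ (i : ℕ) • α (consOmit1 ⁅e, f i⁆ f i))
    (e : Fin (m + 1) → 𝔤) :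
    (∑ i : Fin (m + 1), (-1 : ℤ) ^ (i : ℕ) • ρ (e i) (α (e ∘ i.succAbove)))
      + (∑ i : Fin (m + 1), ∑ j : Fin (m + 1),
          if i < j then
            (-1 : ℤ) ^ ((i : ℕ) + (j : ℕ)) • α (omit2cons ⁅e i, e j⁆ e i j)
          else 0)
    = - ∑ i : Fin (m + 1), ∑ j : Fin (m + 1),
          if i < j then
            (-1 : ℤ) ^ ((i : ℕ) + (j : ℕ)) • α (omit2cons ⁅e i, e j⁆ e i j)
          else 0 := by
  rcases Nat.eq_zero_or_pos m with hm | hm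
  · subst hm
    have h1 : ∀ i : Fin 1, ρ (e i) (α (e ∘ i.succAbove)) = 0 := by
      intro i; rw [hequiv]; simp
    have h2 : (∑ i : Fin 1, ∑ j : Fin 1,
        if i < j then (-1 : ℤ) ^ ((i : ℕ) + (j : ℕ)) • α (omit2cons ⁅e i, e j⁆ e i j)
        else 0) = 0 := by
      apply Finset.sum_eq_zero; intro i _
      apply Finset.sum_eq_zero; intro j _
      have hij : i = j := Subsingleton.elim i j
      simp [hij]
    simp only [h1, smul_zero, Finset.sum_const_zero, zero_add, h2, neg_zero]
  haveI : NeZero m := ⟨hm.ne'⟩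
  set S : A := ∑ i : Fin (m + 1), ∑ j : Fin (m + 1),
      if i < j then (-1 : ℤ) ^ ((i : ℕ) + (j : ℕ)) • α (omit2cons ⁅e i, e j⁆ e i j)
      else 0 with hS
  -- G i j
  set G : Fin (m+1) → Fin (m+1) → A := fun i j =>
    if i < j then (-1 : ℤ) ^ ((i : ℕ) + (j : ℕ) + 1) • α (omit2cons ⁅e i, e j⁆ e i j)
    else if j < i then (-1 : ℤ) ^ ((i : ℕ) + (j : ℕ) + 1) • α (omit2cons ⁅e j, e i⁆ e j i)
    else 0 with hG
  have hX : (∑ i : Fin (m + 1), (-1 : ℤ) ^ (i : ℕ) • ρ (e i) (α (e ∘ i.succAbove)))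
      = ∑ i : Fin (m+1), ∑ j : Fin (m+1), G i j := by
    apply Finset.sum_congr rfl
    intro i _
    rw [hequiv (e i) (e ∘ i.succAbove), Finset.smul_sum]
    rw [Fin.sum_univ_succAbove (G i) i]
    have hii : G i i = 0 := by simp [hG]
    rw [hii, zero_add]
    apply Finset.sum_congr rfl
    intro k _
    simp only [Function.comp_apply]
    rw [smul_smul, ← pow_add]
    by_cases hk : (k:ℕ) < (i:ℕ)
    · -- j = succAbove k < i
      have hjv : ((i.succAbove k : Fin (m+1)) : ℕ) = (k:ℕ) := by
        rw [succAbove_val', if_pos hk]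
      have hjlt : i.succAbove k < i := by
        rw [Fin.lt_def, hjv]; exact hk
      have hnlt : ¬ i < i.succAbove k := lt_asymm hjlt
      rw [tupleB ⁅e i, e (i.succAbove k)⁆ e i k hk]
      simp only [hG, hnlt, if_false, hjlt, if_true, hjv]
      have hlie : ⁅e i, e (i.succAbove k)⁆ = -⁅e (i.succAbove k), e i⁆ := by
        rw [← lie_skew]
      rw [hlie, omit2cons_neg, smul_neg, neg_one_pow_succ, neg_smul]
    · -- j = succAbove k > i
      push_neg at hk
      have hjv : ((i.succAbove k : Fin (m+1)) : ℕ) = (k:ℕ)+1 := by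
        rw [succAbove_val', if_neg (by omega)]
      have hlt : i < i.succAbove k := by
        rw [Fin.lt_def, hjv]; omega
      rw [tupleA ⁅e i, e (i.succAbove k)⁆ e i k hk]
      simp only [hG, hlt, if_true, hjv]
      congr 1
      have h2 : (i:ℕ) + ((k:ℕ)+1) + 1 = ((i:ℕ)+(k:ℕ)) + 2 := by omega
      have h3 : ((-1:ℤ))^((i:ℕ)+(k:ℕ)+2) = (-1)^((i:ℕ))*(-1)^((k:ℕ)) := by
        rw [pow_add, pow_add]; ring
      rw [h2, h3, pow_add]
  rw [hX]
  -- now show ΣΣ G + S = -S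
  have key : (∑ i : Fin (m+1), ∑ j : Fin (m+1), G i j) + S
      = ∑ i : Fin (m+1), ∑ j : Fin (m+1),
          (if j < i then (-1 : ℤ) ^ ((i : ℕ) + (j : ℕ) + 1) • α (omit2cons ⁅e j, e i⁆ e j i)
           else 0) := by
    rw [hS, ← Finset.sum_add_distrib]
    apply Finset.sum_congr rfl
    intro i _
    rw [← Finset.sum_add_distrib]
    apply Finset.sum_congr rfl
    intro j _
    rcases lt_trichotomy i j with h | h | h
    · have h' : ¬ j < i := lt_asymm h
      simp only [hG, h, if_true, h', if_false]
      rw [neg_one_pow_succ, neg_smul, neg_add_cancel]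
    · subst h
      simp [hG]
    · have h' : ¬ i < j := lt_asymm h
      simp [hG, h, h']
  rw [key, Finset.sum_comm, hS]
  rw [← Finset.sum_neg_distrib]
  apply Finset.sum_congr rfl
  intro i _
  rw [← Finset.sum_neg_distrib]
  apply Finset.sum_congr rfl
  intro j _
  by_cases h : i < j
  · simp only [h, if_true]
    rw [show (j:ℕ) + (i:ℕ) + 1 = ((i:ℕ) + (j:ℕ)) + 1 by omega,
      neg_one_pow_succ, neg_smul]
  · simp [h]
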